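/- Let n ≥ 1 be an integer, a ∈ 𝒜 and τ ∈ S¹. Let w be a minimal prefix of σ^n(a) for the vector τγ, i.e. Re(τγ(w)) = min{ Re(τγ(w'')) : w'' a prefix of σ^n(a) }, and let x ∈ 𝒮_a be any sequence satisfying w = σ^{n−1}(p_1^x)σ^{n−2}(p_2^x)…σ(p_{n−1}^x)p_n^x. Then v_a^{(n)}(β₀^n τ) = Re(β₀^n τ · z_a^{(n)}(x)), where β₀ = β/|β|. -/

import Mathlib

open Complex MeasureTheory Filter Set
open scoped BigOperators

noncomputable section

namespace IEMWandering

/-- The half-open unit interval `[0,1)`. -/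
def unitIvl : Set ℝ := Set.Ico (0:ℝ) 1

/-- An interval exchange map on `[0,1)`: a bijection of `[0,1)` that is a translation
on each member of a finite partition of `[0,1)` into half-open intervals. -/
structure IEM (A : Type) [Fintype A] where
  T : ℝ → ℝ
  I : A → Set ℝ
  δ : A → ℝ
  isIco : ∀ a, ∃ l u : ℝ, l < u ∧ I a = Set.Ico l u
  subset_unit : ∀ a, I a ⊆ unitIvl
  partition : ∀ t ∈ unitIvl, ∃! a, t ∈ I a
  translate : ∀ a, ∀ t ∈ I a, T t = t + δ a
  bijOn : Set.BijOn T unitIvl unitIvl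

/-- `substIter σ n a = σⁿ(a)`. -/
def substIter {A : Type} (σ : A → List A) : ℕ → A → List A
  | 0, a => [a]
  | n+1, a => ((σ a).map (substIter σ n)).flatten

/-- Applying a substitution to a word. -/
def substW {A : Type} (σ : A → List A) (w : List A) : List A := (w.map σ).flatten

/-- `substIterW σ k w = σᵏ(w)`. -/
def substIterW {A : Type} (σ : A → List A) (k : ℕ) (w : List A) : List A :=
  (substW σ)^[k] w

/-- A substitution is primitive if some power of it maps every letter to a word
containing every letter. -/
def Primitive {A : Type} (σ : A → List A) : Prop :=
  ∃ n : ℕ, ∀ a b : A, a ∈ substIter σ n b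

/-- The matrix `M` of a substitution: `M a b` = number of occurrences of `b` in `σ a`. -/
def substMatrix {A : Type} [Fintype A] [DecidableEq A] (σ : A → List A) :
    Matrix A A ℂ := fun a b => ((σ a).count b : ℂ)

/-- `γ(w) = γ_{w_0} + … + γ_{w_{n-1}}`. -/
def wordSum {A : Type} (γ : A → ℂ) (w : List A) : ℂ := (w.map γ).sum

/-- `γ` is an eigenvector of the substitution matrix for the eigenvalue `β`. -/
def IsEigenvector {A : Type} [Fintype A] [DecidableEq A] (σ : A → List A) (β : ℂ)
    (γ : A → ℂ) : Prop :=
  γ ≠ 0 ∧ (substMatrix σ).mulVec γ = β • γ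

/-- `z` is not a root of unity. -/
def NotRootOfUnity (z : ℂ) : Prop := ∀ n : ℕ, 0 < n → z ^ n ≠ 1

/-- `β/|β|`. -/
def unitDir (β : ℂ) : ℂ := β / (‖β‖ : ℂ)

/-- A self-similar interval exchange map, together with its renormalization ratio `α`
and its associated substitution `σ`: the first-return map of `T` to `[0,α)`, rescaled
by `α⁻¹`, equals `T`; `(σ a).length` is the first return time `r_a` of `α I_a` to
`[0,α)` and `T^[m] (α I_a) ⊆ I_{(σ a)_m}` for `m < r_a`. -/
structure SelfSimilarIEM (A : Type) [Fintype A] extends IEM A where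
  α : ℝ
  α_pos : 0 < α
  α_lt_one : α < 1
  σ : A → List A
  σ_ne : ∀ a, σ a ≠ []
  visits : ∀ a, ∀ t ∈ I a, ∀ (m : ℕ) (h : m < (σ a).length),
    T^[m] (α * t) ∈ I ((σ a).get ⟨m, h⟩)
  not_first_return : ∀ a, ∀ t ∈ I a, ∀ k : ℕ, 0 < k → k < (σ a).length →
    T^[k] (α * t) ∉ Set.Ico (0:ℝ) α
  self_similar : ∀ a, ∀ t ∈ I a, T^[(σ a).length] (α * t) = α * T t

/-- An affine interval exchange map on `[0,1)` with positive slopes. -/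
structure AffineIEM (A : Type) [Fintype A] where
  f : ℝ → ℝ
  J : A → Set ℝ
  slope : A → ℝ
  intercept : A → ℝ
  slope_pos : ∀ a, 0 < slope a
  isIco : ∀ a, ∃ l u : ℝ, l < u ∧ J a = Set.Ico l u
  subset_unit : ∀ a, J a ⊆ unitIvl
  partition : ∀ t ∈ unitIvl, ∃! a, t ∈ J a
  affine : ∀ a, ∀ t ∈ J a, f t = slope a * t + intercept a
  bijOn : Set.BijOn f unitIvl unitIvl

/-- `h` realizes a semi-conjugacy from `f` to `T`:
it is continuous, surjective, nondecreasing and `h ∘ f = T ∘ h` on `[0,1)`. -/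
def SemiConjWith (T f h : ℝ → ℝ) : Prop :=
  ContinuousOn h unitIvl ∧ Set.SurjOn h unitIvl unitIvl ∧ MonotoneOn h unitIvl ∧
    Set.MapsTo h unitIvl unitIvl ∧ ∀ t ∈ unitIvl, h (f t) = T (h t)

/-- `f` is semi-conjugate with `T`. -/
def SemiConjugate (T f : ℝ → ℝ) : Prop := ∃ h, SemiConjWith T f h

/-- `f` has a wandering interval: a nondegenerate interval whose forward iterates
are pairwise disjoint. -/
def HasWanderingInterval (f : ℝ → ℝ) : Prop :=
  ∃ u v : ℝ, u < v ∧ Set.Ico u v ⊆ unitIvl ∧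
    ∀ m n : ℕ, m ≠ n → Disjoint (f^[m] '' Set.Ico u v) (f^[n] '' Set.Ico u v)

/-- Membership in the substitution subshift `Ω_σ`: every finite subword of `ω`
occurs in some `σⁿ(a)`. -/
def InOmega {A : Type} (σ : A → List A) (ω : ℤ → A) : Prop :=
  ∀ (m : ℤ) (len : ℕ), ∃ (n : ℕ) (a : A),
    (List.ofFn fun i : Fin len => ω (m + (i.val : ℤ))) <:+: substIter σ n a

/-- The word `ω_n … ω_m`. -/
def segment {A : Type} (ω : ℤ → A) (n m : ℤ) : List A :=
  List.ofFn fun i : Fin (m - n + 1).toNat => ω (n + (i.val : ℤ))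

/-- `γ_n(ω)`: the Birkhoff-like sums of `γ` along `ω`. -/
def gammaZ {A : Type} (γ : A → ℂ) (ω : ℤ → A) (n : ℤ) : ℂ :=
  if 0 ≤ n then ∑ i ∈ Finset.range n.toNat, γ (ω (i : ℤ))
  else -∑ i ∈ Finset.range (-n).toNat, γ (ω (n + (i : ℤ)))

/-- `ω` is a minimal sequence for `γ`. -/
def MinimalSeq {A : Type} (σ : A → List A) (γ : A → ℂ) (ω : ℤ → A) : Prop :=
  InOmega σ ω ∧ ∀ n : ℤ, 0 ≤ (gammaZ γ ω n).re

/-- Triples `(p, c, s)` of a prefix, a central letter and a suffix. -/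
abbrev Triple (A : Type) := List A × A × List A

/-- The set `𝒮_a` of reversed prefix-suffix expansions at `a` (indexed from `0`,
so `x m` is the triple `(p_{m+1}, c_{m+1}, s_{m+1})`). -/
def InS {A : Type} (σ : A → List A) (a : A) (x : ℕ → Triple A) : Prop :=
  σ a = (x 0).1 ++ (x 0).2.1 :: (x 0).2.2 ∧
  ∀ m : ℕ, σ ((x m).2.1) = (x (m+1)).1 ++ (x (m+1)).2.1 :: (x (m+1)).2.2

/-- `z_a(x) = Σ_{m≥1} β^{-m} γ(p_m)`. -/
def zrep {A : Type} (β : ℂ) (γ : A → ℂ) (x : ℕ → Triple A) : ℂ :=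
  ∑' m : ℕ, β⁻¹ ^ (m + 1) * wordSum γ (x m).1

/-- `z_a^{(n)}(x) = Σ_{m=1}^n β^{-m} γ(p_m)`. -/
def zrepN {A : Type} (β : ℂ) (γ : A → ℂ) (n : ℕ) (x : ℕ → Triple A) : ℂ :=
  ∑ m ∈ Finset.range n, β⁻¹ ^ (m + 1) * wordSum γ (x m).1

/-- The fractal `𝔉_a`. -/
def Frac {A : Type} (σ : A → List A) (β : ℂ) (γ : A → ℂ) (a : A) : Set ℂ :=
  { z | ∃ x, InS σ a x ∧ zrep β γ x = z }

/-- The finite approximation `𝔉_a^{(n)}`. -/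
def FracN {A : Type} (σ : A → List A) (β : ℂ) (γ : A → ℂ) (n : ℕ) (a : A) : Set ℂ :=
  { z | ∃ x, InS σ a x ∧ zrepN β γ n x = z }

/-- `v_a(τ) = min_{z ∈ 𝔉_a} Re(τ z)`. -/
def vDir {A : Type} (σ : A → List A) (β : ℂ) (γ : A → ℂ) (a : A) (τ : ℂ) : ℝ :=
  sInf ((fun z => (τ * z).re) '' Frac σ β γ a)

/-- `v_a^{(n)}(τ) = min_{z ∈ 𝔉_a^{(n)}} Re(τ z)`. -/
def vDirN {A : Type} (σ : A → List A) (β : ℂ) (γ : A → ℂ) (n : ℕ) (a : A) (τ : ℂ) : ℝ :=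
  sInf ((fun z => (τ * z).re) '' FracN σ β γ n a)

/-- The set `E_a(τ)` of extreme points of `𝔉_a` in direction `τ`. -/
def ExtPts {A : Type} (σ : A → List A) (β : ℂ) (γ : A → ℂ) (a : A) (τ : ℂ) : Set ℂ :=
  { z ∈ Frac σ β γ a | (τ * z).re = vDir σ β γ a τ }

/-- The set `E_a^{(n)}(τ)`. -/
def ExtPtsN {A : Type} (σ : A → List A) (β : ℂ) (γ : A → ℂ) (n : ℕ) (a : A) (τ : ℂ) : Set ℂ :=
  { z ∈ FracN σ β γ n a | (τ * z).re = vDirN σ β γ n a τ }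

/-- The unique representation property: every extreme point of every fractal `𝔉_a`
has a unique representation in `𝒮_a`. -/
def URP {A : Type} (σ : A → List A) (β : ℂ) (γ : A → ℂ) : Prop :=
  ∀ (a : A) (τ : ℂ), ‖τ‖ = 1 →
    ∀ z ∈ ExtPts σ β γ a τ, ∀ x y : ℕ → Triple A,
      InS σ a x → zrep β γ x = z → InS σ a y → zrep β γ y = z → x = y

/-- `(p,c,s)` is a decomposition of `σ(a)`. -/
def IsDecomp {A : Type} (σ : A → List A) (a : A) (d : Triple A) : Prop :=
  σ a = d.1 ++ d.2.1 :: d.2.2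

/-- The subfractal `𝔉_{a,(p,c,s)}`: values of representations starting with `(p,c,s)`. -/
def FracDec {A : Type} (σ : A → List A) (β : ℂ) (γ : A → ℂ) (a : A) (d : Triple A) :
    Set ℂ := { z | ∃ x, InS σ a x ∧ x 0 = d ∧ zrep β γ x = z }

/-- `v_{a,(p,c,s)}(τ)`. -/
def vDec {A : Type} (σ : A → List A) (β : ℂ) (γ : A → ℂ) (a : A) (d : Triple A)
    (τ : ℂ) : ℝ := sInf ((fun z => (τ * z).re) '' FracDec σ β γ a d)

/-- `E_{a,(p,c,s)}(τ) = E_a(τ) ∩ 𝔉_{a,(p,c,s)}`. -/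
def EDec {A : Type} (σ : A → List A) (β : ℂ) (γ : A → ℂ) (a : A) (d : Triple A)
    (τ : ℂ) : Set ℂ := ExtPts σ β γ a τ ∩ FracDec σ β γ a d

/-- The set `Ψ_a` of directions with extreme points in two distinct subfractals. -/
def Psi {A : Type} (σ : A → List A) (β : ℂ) (γ : A → ℂ) (a : A) : Set ℂ :=
  { τ | ‖τ‖ = 1 ∧ ∃ d d' : Triple A, d ≠ d' ∧
      IsDecomp σ a d ∧ IsDecomp σ a d' ∧
      EDec σ β γ a d τ ≠ EDec σ β γ a d' τ ∧
      vDir σ β γ a τ = vDec σ β γ a d τ ∧ vDir σ β γ a τ = vDec σ β γ a d' τ }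

/-- The natural (arc) distance between two points of the unit circle. -/
def arcDist (τ τ' : ℂ) : ℝ := |Complex.arg (τ / τ')|

/-- A good eigenvector: directions in `Ψ(γ)` are badly approximated by the
orbit of `β₀ = β/|β|`. -/
def GoodEigenvector {A : Type} [Fintype A] [DecidableEq A] (σ : A → List A) (β : ℂ)
    (γ : A → ℂ) : Prop :=
  ∀ C : ℝ, 1 < C → ∀ τ ∈ ⋃ a : A, Psi σ β γ a,
    0 < Filter.liminf
      (fun n : ℕ => ((C ^ n * arcDist τ ((unitDir β) ^ n) : ℝ) : EReal)) Filter.atTop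

/-- The left shift on sequences of triples. -/
def shiftS {A : Type} (x : ℕ → Triple A) : ℕ → Triple A := fun m => x (m + 1)

/-- The set `E_a^*(τ)` of limit extreme points. -/
def LimitExt {A : Type} (σ : A → List A) (β : ℂ) (γ : A → ℂ) (a : A) (τ : ℂ) :
    Set ℂ :=
  { z | z ∈ ExtPts σ β γ a τ ∧ ∃ x, InS σ a x ∧ zrep β γ x = z ∧
      ∀ j : ℕ, 0 < j → ∃ (aj : A) (y : ℕ → Triple A), InS σ aj y ∧
        zrep β γ y ∈ ExtPts σ β γ aj ((unitDir β) ^ j * τ) ∧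
        (y (j - 1)).2.1 = a ∧ (fun m => y (m + j)) = x }

/-- Minimality of an i.e.m.: every (forward) orbit is dense in `[0,1)`. -/
def MinimalIEM {A : Type} [Fintype A] (T : IEM A) : Prop :=
  ∀ t ∈ unitIvl, ∀ s ∈ unitIvl, ∀ ε : ℝ, 0 < ε → ∃ n : ℕ, |T.T^[n] t - s| < ε

/-- `ω` is the itinerary of a full (two-sided) orbit of `T`. -/
def IsItinerary {A : Type} [Fintype A] (T : IEM A) (ω : ℤ → A) : Prop :=
  ∃ o : ℤ → ℝ, (∀ n, o n ∈ unitIvl) ∧ (∀ n, T.T (o n) = o (n + 1)) ∧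
    ∀ n, o n ∈ T.I (ω n)

/-- Membership in `Ω_T`, the closure (in the product topology) of the set of
itineraries of points of `[0,1)` under `T`. -/
def InOmegaT {A : Type} [Fintype A] (T : IEM A) (ω : ℤ → A) : Prop :=
  ∀ N : ℕ, ∃ ω', IsItinerary T ω' ∧ ∀ n : ℤ, |n| ≤ (N : ℤ) → ω' n = ω n

/-- The orientation-preserving exchange of the two halves of `[t₀, t₁)`. -/
def halfExchange (t₀ t₁ t : ℝ) : ℝ :=
  if t₀ ≤ t ∧ t < (t₀ + t₁) / 2 then t + (t₁ - t₀) / 2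
  else if (t₀ + t₁) / 2 ≤ t ∧ t < t₁ then t - (t₁ - t₀) / 2
  else t

/-- The cubic Arnoux–Yoccoz interval exchange map. -/
def AYmap (α : ℝ) : ℝ → ℝ := fun t =>
  halfExchange 0 1 (halfExchange 0 α (halfExchange α (α + α^2)
    (halfExchange (α + α^2) 1 t)))

/-- The cubic Arnoux–Yoccoz substitution on `{1, …, 9}` (letters `0`-indexed):
`σ(1)=35, σ(2)=45, σ(3)=46, σ(4)=17, σ(5)=18, σ(6)=19, σ(7)=29, σ(8)=2, σ(9)=3`. -/
def AYsub : Fin 9 → List (Fin 9) :=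
  ![[2,4],[3,4],[3,5],[0,6],[0,7],[0,8],[1,8],[1],[2]]

/-- The eigenvector of the Arnoux–Yoccoz matrix for the eigenvalue `β`. -/
def AYvec (β : ℂ) : Fin 9 → ℂ :=
  ![β^2+β+1, -β, -β, -β^2-β-1, β+1, β+1, -β^2-β-2, -1, -1]

end IEMWandering



section Aux
set_option linter.unusedSectionVars false
variable {A : Type} [Fintype A] [DecidableEq A] (σ : A → List A)

open IEMWandering

lemma substW_append (u v : List A) : substW σ (u ++ v) = substW σ u ++ substW σ v := by
  simp [substW]

lemma substIterW_append (k : ℕ) (u v : List A) :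
    substIterW σ k (u ++ v) = substIterW σ k u ++ substIterW σ k v := by
  induction k generalizing u v with
  | zero => simp [substIterW]
  | succ k ih =>
    simp only [substIterW, Function.iterate_succ_apply] at *
    rw [substW_append, ih]

lemma substIterW_nil (k : ℕ) : substIterW σ k ([] : List A) = [] := by
  induction k with
  | zero => simp [substIterW]
  | succ k ih => simpa [substIterW, Function.iterate_succ_apply, substW] using ih

lemma substIter_eq (n : ℕ) (a : A) : substIter σ n a = substIterW σ n [a] := by
  induction n generalizing a with
  | zero => simp [substIter, substIterW]
  | succ n ih =>
    have h1 : substIterW σ (n+1) [a] = substIterW σ n (σ a) := by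
      simp [substIterW, Function.iterate_succ_apply, substW]
    rw [h1]
    show ((σ a).map (substIter σ n)).flatten = _
    induction σ a with
    | nil => simp [substIterW_nil]
    | cons b l ihl =>
      have : b :: l = [b] ++ l := rfl
      rw [this, substIterW_append, List.map_append, List.flatten_append, ihl]
      simp [ih]

lemma substIterW_succ_single (n : ℕ) (a : A) :
    substIterW σ (n+1) [a] = substIterW σ n (σ a) := by
  simp [substIterW, Function.iterate_succ_apply, substW]

lemma wordSum_append (γ : A → ℂ) (u v : List A) :
    wordSum γ (u ++ v) = wordSum γ u + wordSum γ v := by simp [wordSum]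

lemma wordSum_sigma (β : ℂ) (γ : A → ℂ) (hγ : IsEigenvector σ β γ) (a : A) :
    wordSum γ (σ a) = β * γ a := by
  have h := congrFun hγ.2 a
  simp only [Matrix.mulVec, dotProduct, Pi.smul_apply, smul_eq_mul] at h
  rw [← h, wordSum, Finset.sum_list_map_count]
  rw [Finset.sum_subset (Finset.subset_univ (σ a).toFinset)]
  · simp [substMatrix, nsmul_eq_mul]
  · intro b _ hb
    simp only [List.mem_toFinset] at hb
    simp [substMatrix, List.count_eq_zero_of_not_mem hb]

lemma wordSum_substW (β : ℂ) (γ : A → ℂ) (hγ : IsEigenvector σ β γ) (w : List A) :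
    wordSum γ (substW σ w) = β * wordSum γ w := by
  induction w with
  | nil => simp [substW, wordSum]
  | cons a w ih =>
    have : substW σ (a :: w) = σ a ++ substW σ w := by simp [substW]
    rw [this, wordSum_append, ih, wordSum_sigma σ β γ hγ]
    simp [wordSum]
    ring

lemma wordSum_substIterW (β : ℂ) (γ : A → ℂ) (hγ : IsEigenvector σ β γ) (k : ℕ) (w : List A) :
    wordSum γ (substIterW σ k w) = β ^ k * wordSum γ w := by
  induction k generalizing w with
  | zero => simp [substIterW]
  | succ k ih =>
    rw [substIterW, Function.iterate_succ_apply, ← substIterW,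
      ih, wordSum_substW σ β γ hγ]
    ring

/-- The word `σ^{n-1}(p₁)…p_n` associated with `x ∈ 𝒮_a`. -/
def wWord (n : ℕ) (x : ℕ → Triple A) : List A :=
  (List.ofFn fun m : Fin n => substIterW σ (n - 1 - (m : ℕ)) (x (m : ℕ)).1).flatten

lemma shift_InS (a : A) (x : ℕ → Triple A) (hx : InS σ a x) :
    InS σ ((x 0).2.1) (fun m => x (m+1)) := by
  exact ⟨hx.2 0, fun m => hx.2 (m+1)⟩

lemma wWord_prefix (n : ℕ) : ∀ (a : A) (x : ℕ → Triple A), InS σ a x →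
    wWord σ n x <+: substIter σ n a := by
  induction n with
  | zero => intro a x _; simp [wWord]
  | succ n ih =>
    intro a x hx
    have hdec := hx.1
    have hshift := shift_InS σ a x hx
    have hIH := ih ((x 0).2.1) (fun m => x (m+1)) hshift
    obtain ⟨t, ht⟩ := hIH
    have hW : wWord σ (n+1) x = substIterW σ n (x 0).1 ++ wWord σ n (fun m => x (m+1)) := by
      unfold wWord
      rw [List.ofFn_succ, List.flatten_cons]
      congr 1
      congr 1
      congr 1
      funext i
      have h3 : n + 1 - 1 - (i.val + 1) = n - 1 - i.val := by omega
      simp only [Fin.val_succ, h3]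
    rw [substIter_eq, substIterW_succ_single, hdec]
    refine ⟨t ++ substIterW σ n (x 0).2.2, ?_⟩
    rw [hW]
    have : (x 0).1 ++ (x 0).2.1 :: (x 0).2.2 = (x 0).1 ++ ([(x 0).2.1] ++ (x 0).2.2) := by simp
    rw [this, substIterW_append, substIterW_append, ← substIter_eq, ← ht]
    simp
lemma pow_inv_eq (β : ℂ) (hβ0 : β ≠ 0) (n m : ℕ) (h : m < n) :
    β ^ n * β⁻¹ ^ (m + 1) = β ^ (n - 1 - m) := by
  rw [inv_pow, eq_comm, eq_mul_inv_iff_mul_eq₀ (pow_ne_zero _ hβ0), ← pow_add]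
  congr 1
  omega

lemma wordSum_flatten (γ : A → ℂ) (l : List (List A)) :
    wordSum γ l.flatten = (l.map (wordSum γ)).sum := by
  induction l with
  | nil => simp [wordSum]
  | cons h t ih => simp [List.flatten_cons, wordSum_append, ih]

lemma wordSum_wWord (β : ℂ) (γ : A → ℂ) (hγ : IsEigenvector σ β γ) (hβ0 : β ≠ 0)
    (n : ℕ) (x : ℕ → Triple A) :
    wordSum γ (wWord σ n x) = β ^ n * zrepN β γ n x := by
  rw [wWord, wordSum_flatten, List.map_ofFn, List.sum_ofFn, zrepN, Finset.mul_sum,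
    ← Fin.sum_univ_eq_sum_range]
  apply Finset.sum_congr rfl
  intro m _
  simp only [Function.comp_apply]
  rw [wordSum_substIterW σ β γ hγ, ← mul_assoc, pow_inv_eq β hβ0 n m m.isLt]

end Aux


/-- **Lemma 5.4.** Let `n ≥ 1`, `a ∈ 𝒜`, `τ ∈ S¹`. Let `w` be a minimal prefix of
`σⁿ(a)` for the vector `τγ` and let `x ∈ 𝒮_a` satisfy
`w = σ^{n−1}(p_1)σ^{n−2}(p_2)…σ(p_{n−1})p_n`. Then
`v_a^{(n)}(β₀ⁿτ) = Re(β₀ⁿτ · z_a^{(n)}(x))`. -/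
theorem minimalPrefix_extreme {A : Type} [Fintype A] [DecidableEq A]
    (σ : A → List A) (hprim : IEMWandering.Primitive σ)
    (β : ℂ) (γ : A → ℂ) (hβ : 1 < ‖β‖)
    (hγ : IEMWandering.IsEigenvector σ β γ)
    (n : ℕ) (hn : 1 ≤ n) (a : A) (τ : ℂ) (hτ : ‖τ‖ = 1)
    (w : List A) (hw : w <+: IEMWandering.substIter σ n a)
    (hmin : ∀ w' : List A, w' <+: IEMWandering.substIter σ n a →
      (τ * IEMWandering.wordSum γ w).re ≤ (τ * IEMWandering.wordSum γ w').re)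
    (x : ℕ → IEMWandering.Triple A) (hx : IEMWandering.InS σ a x)
    (hwx : w = (List.ofFn fun m : Fin n =>
      IEMWandering.substIterW σ (n - 1 - (m : ℕ)) (x (m : ℕ)).1).flatten) :
    IEMWandering.vDirN σ β γ n a ((IEMWandering.unitDir β) ^ n * τ) =
      ((IEMWandering.unitDir β) ^ n * τ * IEMWandering.zrepN β γ n x).re := by
  classical
  open IEMWandering in
  have hβ0 : β ≠ 0 := by
    intro h
    rw [h] at hβ
    simp at hβ
    linarith
  have habs : (0:ℝ) < ‖β‖ := lt_trans one_pos hβ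
  set c : ℝ := (‖β‖ ^ n)⁻¹ with hc
  have hcpos : 0 < c := by positivity
  have hud : (IEMWandering.unitDir β) ^ n = (c : ℂ) * β ^ n := by
    rw [IEMWandering.unitDir, div_pow, hc]
    push_cast
    rw [div_eq_mul_inv, mul_comm]
  have key : ∀ y : ℕ → IEMWandering.Triple A, IEMWandering.InS σ a y →
      ((IEMWandering.unitDir β) ^ n * τ * IEMWandering.zrepN β γ n y).re
        = c * (τ * IEMWandering.wordSum γ (wWord σ n y)).re := by
    intro y hy
    rw [wordSum_wWord σ β γ hγ hβ0, hud]
    have h2 : (c:ℂ) * β ^ n * τ * IEMWandering.zrepN β γ n y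
        = (c:ℂ) * (τ * (β ^ n * IEMWandering.zrepN β γ n y)) := by ring
    rw [h2, Complex.re_ofReal_mul]
  have hwx' : IEMWandering.wordSum γ w = IEMWandering.wordSum γ (wWord σ n x) := by
    rw [hwx]; rfl
  have hself : ((IEMWandering.unitDir β) ^ n * τ * IEMWandering.zrepN β γ n x).re
      = c * (τ * IEMWandering.wordSum γ w).re := by
    rw [key x hx, hwx']
  have hmem : ((IEMWandering.unitDir β) ^ n * τ * IEMWandering.zrepN β γ n x).re ∈
      ((fun z => ((IEMWandering.unitDir β) ^ n * τ * z).re) ''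
        IEMWandering.FracN σ β γ n a) :=
    ⟨IEMWandering.zrepN β γ n x, ⟨x, hx, rfl⟩, rfl⟩
  have hlb : ∀ s ∈ ((fun z => ((IEMWandering.unitDir β) ^ n * τ * z).re) ''
      IEMWandering.FracN σ β γ n a),
      ((IEMWandering.unitDir β) ^ n * τ * IEMWandering.zrepN β γ n x).re ≤ s := by
    rintro s ⟨z, ⟨y, hy, rfl⟩, rfl⟩
    dsimp only
    rw [key y hy, hself]
    exact mul_le_mul_of_nonneg_left
      (hmin _ (wWord_prefix σ n a y hy)) (le_of_lt hcpos)
  rw [IEMWandering.vDirN]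
  exact le_antisymm (csInf_le ⟨_, hlb⟩ hmem) (le_csInf ⟨_, hmem⟩ hlb)
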